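/- The open set A = {(t,x) : x > 0, 0 < t − x < f⁻¹(x)} satisfies A ⊆ J⁺(0) \ closure(I⁺(0)) for the metric g = −dt² + (1 + sqrt((t−|x|)₊))dx²; in particular the globally hyperbolic spacetime (ℝ², g) exhibits causal bubbling. -/

import Mathlib

noncomputable def rho (t x : ℝ) : ℝ := 1 + Real.sqrt (max (t - |x|) 0)

noncomputable def f (y : ℝ) : ℝ :=
  4 / 3 * ((1 + Real.sqrt y) ^ ((3 : ℝ) / 2) - 1) + 2 * Real.sqrt y

/-- The causal future J⁺(0) of the origin: points reachable by a
future-directed Lipschitz causal curve. -/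
def Jplus : Set (ℝ × ℝ) :=
  {p | p = (0, 0) ∨ ∃ (T : ℝ) (γ : ℝ → ℝ × ℝ) (K : NNReal), 0 < T ∧
    LipschitzOnWith K γ (Set.Icc 0 T) ∧ γ 0 = (0, 0) ∧ γ T = p ∧
    (∀ᵐ s ∂(MeasureTheory.volume.restrict (Set.Icc (0 : ℝ) T)),
      0 < deriv (fun s => (γ s).1) s ∧
      -(deriv (fun s => (γ s).1) s) ^ 2 +
        rho (γ s).1 (γ s).2 * (deriv (fun s => (γ s).2) s) ^ 2 ≤ 0)}

/-- The chronological future I⁺(0) of the origin: points reachable by a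
future-directed Lipschitz timelike curve. -/
def Iplus : Set (ℝ × ℝ) :=
  {p | ∃ (T : ℝ) (γ : ℝ → ℝ × ℝ) (K : NNReal), 0 < T ∧
    LipschitzOnWith K γ (Set.Icc 0 T) ∧ γ 0 = (0, 0) ∧ γ T = p ∧
    (∀ᵐ s ∂(MeasureTheory.volume.restrict (Set.Icc (0 : ℝ) T)),
      0 < deriv (fun s => (γ s).1) s ∧
      -(deriv (fun s => (γ s).1) s) ^ 2 +
        rho (γ s).1 (γ s).2 * (deriv (fun s => (γ s).2) s) ^ 2 < 0)}

set_option maxHeartbeats 1000000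

open Set MeasureTheory Filter Topology

lemma f_zero : f 0 = 0 := by
  simp [f, Real.one_rpow]

lemma f_nonneg (y : ℝ) : 0 ≤ f y := by
  have h1 : (1:ℝ) ≤ (1 + Real.sqrt y) ^ ((3:ℝ)/2) := by
    calc (1:ℝ) = 1 ^ ((3:ℝ)/2) := (Real.one_rpow _).symm
    _ ≤ (1 + Real.sqrt y) ^ ((3:ℝ)/2) :=
      Real.rpow_le_rpow (by norm_num) (by linarith [Real.sqrt_nonneg y]) (by norm_num)
  have := Real.sqrt_nonneg y
  unfold f; nlinarith

lemma f_lt_f {a b : ℝ} (ha : 0 ≤ a) (hab : a < b) : f a < f b := by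
  have hs : Real.sqrt a < Real.sqrt b := Real.sqrt_lt_sqrt ha hab
  have h1 : (1 + Real.sqrt a) ^ ((3:ℝ)/2) < (1 + Real.sqrt b) ^ ((3:ℝ)/2) :=
    Real.rpow_lt_rpow (by linarith [Real.sqrt_nonneg a]) (by linarith) (by norm_num)
  unfold f; nlinarith

lemma f_continuous : Continuous f := by
  have h1 : Continuous fun y : ℝ => (1 + Real.sqrt y) ^ ((3:ℝ)/2) := by
    apply Continuous.rpow_const (by continuity)
    intro y
    left
    positivity
  unfold f
  fun_prop

lemma f_hasDerivAt {y : ℝ} (hy : 0 < y) :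
    HasDerivAt f ((Real.sqrt (1 + Real.sqrt y) + 1) / Real.sqrt y) y := by
  have hsy : 0 < Real.sqrt y := Real.sqrt_pos.2 hy
  have h1 : HasDerivAt (fun x : ℝ => 1 + Real.sqrt x) (1 / (2 * Real.sqrt y)) y := by
    simpa using (Real.hasDerivAt_sqrt hy.ne').const_add 1
  have h2 : HasDerivAt (fun x : ℝ => x ^ ((3:ℝ)/2)) (((3:ℝ)/2) * (1 + Real.sqrt y) ^ ((1:ℝ)/2))
      (1 + Real.sqrt y) := by
    have := Real.hasDerivAt_rpow_const (x := 1 + Real.sqrt y) (p := (3:ℝ)/2)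
      (Or.inl (by positivity))
    convert this using 2
    norm_num
  have h3 : HasDerivAt (fun x : ℝ => (1 + Real.sqrt x) ^ ((3:ℝ)/2))
      ((((3:ℝ)/2) * (1 + Real.sqrt y) ^ ((1:ℝ)/2)) * (1 / (2 * Real.sqrt y))) y := by
    have := h2.comp y h1
    exact this
  have h4 : HasDerivAt f (4/3 * ((((3:ℝ)/2) * (1 + Real.sqrt y) ^ ((1:ℝ)/2)) * (1 / (2 * Real.sqrt y)))
      + 2 * (1 / (2 * Real.sqrt y))) y := by
    exact ((h3.sub_const 1).const_mul (4/3)).add ((Real.hasDerivAt_sqrt hy.ne').const_mul 2)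
  convert h4 using 1
  rw [← Real.sqrt_eq_rpow]
  field_simp
  ring

lemma f_nonpos {y : ℝ} (hy : y ≤ 0) : f y = 0 := by
  rw [f, Real.sqrt_eq_zero'.2 hy]
  norm_num [Real.one_rpow]

lemma lip_mono_of_ae_deriv_nonneg {h : ℝ → ℝ} {K : NNReal} {a b : ℝ} (hab : a ≤ b)
    (hlip : LipschitzOnWith K h (Set.Icc a b))
    (hd : ∀ᵐ s, s ∈ Set.Ioo a b → ∃ d : ℝ, 0 ≤ d ∧ HasDerivAt h d s) :
    h a ≤ h b := by
  have main : ∀ ε : ℝ, 0 < ε → h a - h b ≤ ε * (b - a) + K * ε := by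
    intro ε hε
    set N : Set ℝ :=
      {s | ¬ (s ∈ Set.Ioo a b → ∃ d : ℝ, 0 ≤ d ∧ HasDerivAt h d s)} ∪ {a} with hNdef
    have hNnull : volume N = 0 :=
      measure_union_null (ae_iff.1 hd) (measure_singleton a)
    obtain ⟨U, hNU, hUopen, hUvol⟩ :=
      Set.exists_isOpen_lt_of_lt N (ENNReal.ofReal ε)
        (by rw [hNnull]; exact ENNReal.ofReal_pos.2 hε)
    have hUfin : volume U < ⊤ := hUvol.trans ENNReal.ofReal_lt_top
    set ind : ℝ → ℝ := U.indicator (fun _ => (1:ℝ)) with hinddef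
    have hind_nonneg : ∀ s, 0 ≤ ind s := fun s => Set.indicator_nonneg (by intros; norm_num) s
    have hind_int : Integrable ind := by
      rw [hinddef, integrable_indicator_iff hUopen.measurableSet]
      exact integrableOn_const hUfin.ne
    set m : ℝ → ℝ := fun t => ∫ s in a..t, ind s with hmdef
    have hm_cont : Continuous m :=
      intervalIntegral.continuous_primitive (fun _ _ => hind_int.intervalIntegrable) a
    have hm_sub : ∀ x z : ℝ, m z - m x = ∫ s in x..z, ind s := fun x z =>
      intervalIntegral.integral_interval_sub_left hind_int.intervalIntegrable
        hind_int.intervalIntegrable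
    have hm_mono : ∀ x z : ℝ, x ≤ z → m x ≤ m z := by
      intro x z hxz
      have := hm_sub x z
      have h2 : 0 ≤ ∫ s in x..z, ind s :=
        intervalIntegral.integral_nonneg hxz (fun s _ => hind_nonneg s)
      linarith
    have hm_gain : ∀ x z : ℝ, x ≤ z → Set.Icc x z ⊆ U → m z - m x = z - x := by
      intro x z hxz hsub
      rw [hm_sub x z]
      have : ∫ s in x..z, ind s = ∫ s in x..z, (1:ℝ) := by
        apply intervalIntegral.integral_congr
        intro w hw
        rw [Set.uIcc_of_le hxz] at hw
        exact Set.indicator_of_mem (hsub hw) _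
      rw [this]
      simp
    have hm_le : m b ≤ ε := by
      have h1 : m b = ∫ s in Set.Ioc a b, ind s := by
        rw [hmdef]; exact intervalIntegral.integral_of_le hab
      have h2 : ∫ s in Set.Ioc a b, ind s ≤ ∫ s, ind s :=
        setIntegral_le_integral hind_int (Filter.Eventually.of_forall hind_nonneg)
      have h3 : ∫ s, ind s = (volume U).toReal • (1:ℝ) :=
        integral_indicator_const (1:ℝ) hUopen.measurableSet
      have h4 : (volume U).toReal ≤ ε := ENNReal.toReal_le_of_le_ofReal hε.le hUvol.le
      rw [h1]
      rw [h3] at h2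
      simpa using h2.trans (by simpa using h4)
    set g : ℝ → ℝ := fun s => h s - h a + ε * (s - a) + (K : ℝ) * m s with hgdef
    have hg_cont : ContinuousOn g (Set.Icc a b) := by
      apply ContinuousOn.add
      apply ContinuousOn.add
      · exact hlip.continuousOn.sub continuousOn_const
      · exact (continuous_const.mul (continuous_id.sub continuous_const)).continuousOn
      · exact (continuous_const.mul hm_cont).continuousOn
    set S : Set ℝ := {s | 0 ≤ g s} with hSdef
    have hScl : IsClosed (S ∩ Set.Icc a b) := by
      rw [Set.inter_comm]
      exact hg_cont.preimage_isClosed_of_isClosed isClosed_Icc isClosed_Ici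
    have ha_mem : a ∈ S := by
      simp only [hSdef, Set.mem_setOf_eq, hgdef]
      have : m a = 0 := intervalIntegral.integral_same
      simp [this]
    have hgt : ∀ x ∈ S ∩ Set.Ico a b, ∀ y ∈ Set.Ioi x, (S ∩ Set.Ioc x y).Nonempty := by
      rintro x ⟨hxS, hxa, hxb⟩ y hy
      rw [Set.mem_Ioi] at hy
      by_cases hxU : x ∈ U
      · obtain ⟨r, hr, hball⟩ := Metric.isOpen_iff.1 hUopen x hxU
        set z := min (x + r/2) (min y b) with hzdef
        have hz1 : x < z := lt_min (by linarith) (lt_min hy hxb)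
        have hzb : z ≤ b := (min_le_right _ _).trans (min_le_right _ _)
        have hzy : z ≤ y := (min_le_right _ _).trans (min_le_left _ _)
        have hzr : z ≤ x + r/2 := min_le_left _ _
        have hIcc : Set.Icc x z ⊆ U := by
          intro w hw
          apply hball
          rw [Metric.mem_ball, Real.dist_eq, abs_lt]
          constructor <;> [linarith [hw.1]; linarith [hw.2]]
        have hmz : m z - m x = z - x := hm_gain x z hz1.le hIcc
        have hlz : |h z - h x| ≤ (K:ℝ) * |z - x| := by
          have := hlip.dist_le_mul z ⟨hxa.trans hz1.le, hzb⟩ x ⟨hxa, hxb.le⟩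
          rwa [Real.dist_eq, Real.dist_eq] at this
        have habs : h z - h x ≥ -((K:ℝ) * (z - x)) := by
          rw [abs_of_nonneg (by linarith : (0:ℝ) ≤ z - x)] at hlz
          have := abs_le.1 hlz
          linarith [this.1]
        refine ⟨z, ?_, hz1, hzy⟩
        simp only [hSdef, Set.mem_setOf_eq, hgdef] at hxS ⊢
        have hK : (0:ℝ) ≤ (K:ℝ) := K.2
        have hKm : (K:ℝ) * m z = (K:ℝ) * m x + (K:ℝ) * (z - x) := by
          linear_combination (K:ℝ) * hmz
        nlinarith
      · have hxN : x ∉ N := fun hx => hxU (hNU hx)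
        have hxa' : x ≠ a := by
          intro hxeq
          exact hxN (Or.inr (by simp [hxeq]))
        have hx_good : ∃ d : ℝ, 0 ≤ d ∧ HasDerivAt h d x := by
          have : x ∈ Set.Ioo a b → ∃ d : ℝ, 0 ≤ d ∧ HasDerivAt h d x := by
            by_contra hcon
            exact hxN (Or.inl hcon)
          exact this ⟨lt_of_le_of_ne hxa (Ne.symm hxa'), hxb⟩
        obtain ⟨d, hd0, hderiv⟩ := hx_good
        have hslope : Tendsto (slope h x) (𝓝[>] x) (𝓝 d) :=
          (hasDerivAt_iff_tendsto_slope.1 hderiv).mono_left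
            (nhdsWithin_mono x (fun w hw => ne_of_gt hw))
        have ev1 : ∀ᶠ w in 𝓝[>] x, -ε < slope h x w :=
          hslope.eventually (eventually_gt_nhds (by linarith))
        have ev2 : Set.Ioc x (min y b) ∈ 𝓝[>] x :=
          Ioc_mem_nhdsGT_of_mem ⟨le_rfl, lt_min hy hxb⟩
        obtain ⟨z, hz_slope, hz_mem⟩ := (ev1.and ev2).exists
        have hzx : x < z := hz_mem.1
        have hzy : z ≤ y := hz_mem.2.trans (min_le_left _ _)
        have hzb : z ≤ b := hz_mem.2.trans (min_le_right _ _)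
        have hslope_val : -ε < (h z - h x) / (z - x) := by
          rwa [slope_def_field] at hz_slope
        have hgain : h z - h x > -ε * (z - x) := by
          have hpos : (0:ℝ) < z - x := by linarith
          calc h z - h x = ((h z - h x) / (z - x)) * (z - x) := by field_simp
          _ > -ε * (z - x) := by
            apply mul_lt_mul_of_pos_right hslope_val hpos
        have hmm : m x ≤ m z := hm_mono x z hzx.le
        refine ⟨z, ?_, hzx, hzy⟩
        simp only [hSdef, Set.mem_setOf_eq, hgdef] at hxS ⊢
        have hK : (0:ℝ) ≤ (K:ℝ) := K.2
        have hKm : (K:ℝ) * m x ≤ (K:ℝ) * m z := mul_le_mul_of_nonneg_left hmm hK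
        nlinarith
    have hb_mem : b ∈ S :=
      hScl.Icc_subset_of_forall_exists_gt ha_mem hgt (Set.right_mem_Icc.2 hab)
    have : 0 ≤ g b := hb_mem
    simp only [hgdef] at this
    have hK : (0:ℝ) ≤ (K:ℝ) := K.2
    nlinarith
  by_contra hc
  push_neg at hc
  set c := h a - h b with hcdef
  have hc0 : 0 < c := by simp [hcdef]; linarith
  have hden : (0:ℝ) < b - a + (K:ℝ) + 1 := by
    have := K.2
    have : (0:ℝ) ≤ (K:ℝ) := K.2
    linarith
  have := main (c / (b - a + (K:ℝ) + 1)) (div_pos hc0 hden)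
  set ε := c / (b - a + (K:ℝ) + 1) with hedef
  have hεpos : 0 < ε := div_pos hc0 hden
  have : c ≤ ε * (b - a + (K:ℝ)) := by linarith [this]
  have hlt : ε * (b - a + (K:ℝ)) < ε * (b - a + (K:ℝ) + 1) := by nlinarith
  have heq : ε * (b - a + (K:ℝ) + 1) = c := by
    rw [hedef]; field_simp
  linarith


lemma timelike_bound {T : ℝ} {γ : ℝ → ℝ × ℝ} {K : NNReal} (hT : 0 < T)
    (hlip : LipschitzOnWith K γ (Set.Icc 0 T)) (h0 : γ 0 = (0, 0))
    (hae : ∀ᵐ s ∂(MeasureTheory.volume.restrict (Set.Icc (0 : ℝ) T)),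
      0 < deriv (fun s => (γ s).1) s ∧
      -(deriv (fun s => (γ s).1) s) ^ 2 +
        rho (γ s).1 (γ s).2 * (deriv (fun s => (γ s).2) s) ^ 2 < 0) :
    (γ T).2 ≤ f ((γ T).1 - (γ T).2) := by
  classical
  set t : ℝ → ℝ := fun s => (γ s).1 with htdef
  set x : ℝ → ℝ := fun s => (γ s).2 with hxdef
  set u : ℝ → ℝ := fun s => t s - x s with hudef
  have ht_lip : LipschitzOnWith K t (Icc 0 T) := by
    have := (LipschitzWith.prod_fst).comp_lipschitzOnWith hlip
    rw [one_mul] at this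
    exact this
  have hx_lip : LipschitzOnWith K x (Icc 0 T) := by
    have := (LipschitzWith.prod_snd).comp_lipschitzOnWith hlip
    rw [one_mul] at this
    exact this
  have hu_lip : LipschitzOnWith (K + K) u (Icc 0 T) := ht_lip.sub hx_lip
  have ht0 : t 0 = 0 := by rw [htdef]; simp [h0]
  have hx0 : x 0 = 0 := by rw [hxdef]; simp [h0]
  have hu0 : u 0 = 0 := by rw [hudef]; simp [ht0, hx0]
  -- a.e. good points
  have hrad : ∀ᵐ s ∂(volume.restrict (Icc (0:ℝ) T)), DifferentiableWithinAt ℝ x (Icc 0 T) s :=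
    hx_lip.ae_differentiableWithinAt_real measurableSet_Icc
  have hP : ∀ᵐ s ∂(volume.restrict (Ioo (0:ℝ) T)),
      s ∈ Ioo 0 T ∧ DifferentiableAt ℝ t s ∧ DifferentiableAt ℝ x s ∧
      0 < deriv t s ∧ rho (t s) (x s) * (deriv x s) ^ 2 < (deriv t s) ^ 2 := by
    filter_upwards [ae_restrict_of_ae_restrict_of_subset Ioo_subset_Icc_self hae,
      ae_restrict_of_ae_restrict_of_subset Ioo_subset_Icc_self hrad,
      ae_restrict_mem measurableSet_Ioo] with s h1 h2 h3
    have hdt : DifferentiableAt ℝ t s := by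
      by_contra hc
      rw [deriv_zero_of_not_differentiableAt hc] at h1
      exact lt_irrefl 0 h1.1
    have hdx : DifferentiableAt ℝ x s := h2.differentiableAt (Icc_mem_nhds h3.1 h3.2)
    exact ⟨h3, hdt, hdx, h1.1, by linarith [h1.2]⟩
  have hP' : ∀ᵐ s, s ∈ Ioo (0:ℝ) T →
      (s ∈ Ioo 0 T ∧ DifferentiableAt ℝ t s ∧ DifferentiableAt ℝ x s ∧
      0 < deriv t s ∧ rho (t s) (x s) * (deriv x s) ^ 2 < (deriv t s) ^ 2) :=
    (ae_restrict_iff' measurableSet_Ioo).1 hP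
  have rho_ge : ∀ a b : ℝ, 1 ≤ rho a b := fun a b =>
    le_add_of_nonneg_right (Real.sqrt_nonneg _)
  -- |x'| < t' at good points
  have habs_lt : ∀ s, DifferentiableAt ℝ t s → DifferentiableAt ℝ x s →
      0 < deriv t s → rho (t s) (x s) * (deriv x s) ^ 2 < (deriv t s) ^ 2 →
      |deriv x s| < deriv t s := by
    intro s _ _ hdt htl
    have h1 : (deriv x s) ^ 2 < (deriv t s) ^ 2 := by
      have := rho_ge (t s) (x s)
      nlinarith [sq_nonneg (deriv x s)]
    have := sq_abs (deriv x s)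
    nlinarith [abs_nonneg (deriv x s)]
  -- u monotone
  have hu_mono : ∀ a' b' : ℝ, 0 ≤ a' → a' ≤ b' → b' ≤ T → u a' ≤ u b' := by
    intro a' b' ha' hab' hb'
    apply lip_mono_of_ae_deriv_nonneg hab' (hu_lip.mono (Icc_subset_Icc ha' hb'))
    filter_upwards [hP'] with s hs hmem
    obtain ⟨hsIoo, hdt, hdx, hdt0, htl⟩ :=
      hs ⟨lt_of_le_of_lt ha' hmem.1, lt_of_lt_of_le hmem.2 hb'⟩
    refine ⟨deriv t s - deriv x s, ?_, (hdt.hasDerivAt.sub hdx.hasDerivAt)⟩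
    have := habs_lt s hdt hdx hdt0 htl
    have := le_abs_self (deriv x s)
    linarith
  have hu_nonneg : ∀ s, 0 ≤ s → s ≤ T → 0 ≤ u s := by
    intro s hs hsT
    have := hu_mono 0 s le_rfl hs hsT
    linarith [hu0 ▸ this]
  -- u strictly positive on (0, T]
  have hu_pos : ∀ σ, 0 < σ → σ ≤ T → 0 < u σ := by
    intro σ hσ hσT
    rcases lt_or_ge 0 (u σ) with h | h
    · exact h
    exfalso
    have huzero : ∀ s ∈ Ioo 0 σ, u s = 0 := by
      intro s hs
      have h1 : u s ≤ u σ := hu_mono s σ hs.1.le hs.2.le hσT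
      have h2 : 0 ≤ u s := hu_nonneg s hs.1.le (hs.2.le.trans hσT)
      linarith
    have hres : ∀ᵐ s ∂(volume.restrict (Ioo (0:ℝ) σ)),
        (s ∈ Ioo 0 T ∧ DifferentiableAt ℝ t s ∧ DifferentiableAt ℝ x s ∧
        0 < deriv t s ∧ rho (t s) (x s) * (deriv x s) ^ 2 < (deriv t s) ^ 2) :=
      ae_restrict_of_ae_restrict_of_subset (Ioo_subset_Ioo le_rfl hσT) hP
    have hne : NeBot (ae (volume.restrict (Ioo (0:ℝ) σ))) := by
      rw [ae_neBot, Ne, Measure.restrict_eq_zero]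
      simp [Real.volume_Ioo, hσ]
    obtain ⟨s, hs1, hs2⟩ := (hres.and (ae_restrict_mem measurableSet_Ioo)).exists
    obtain ⟨hsIoo, hdt, hdx, hdt0, htl⟩ := hs1
    have hder1 : HasDerivAt u (deriv t s - deriv x s) s := hdt.hasDerivAt.sub hdx.hasDerivAt
    have hder2 : HasDerivAt u 0 s := by
      have hev : u =ᶠ[𝓝 s] fun _ => 0 :=
        eventually_of_mem (isOpen_Ioo.mem_nhds hs2) huzero
      exact (hasDerivAt_const s 0).congr_of_eventuallyEq hev
    have heq : deriv t s - deriv x s = 0 := hder1.unique hder2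
    have h3 := habs_lt s hdt hdx hdt0 htl
    have h4 := le_abs_self (deriv x s)
    linarith
  -- main invariant
  set G : ℝ → ℝ := fun s => f (u s) - x s with hGdef
  suffices hGT : 0 ≤ G T by
    simp only [hGdef, hudef, htdef, hxdef] at hGT
    linarith
  by_contra hGT
  push_neg at hGT
  have hG_cont : ContinuousOn G (Icc 0 T) :=
    (f_continuous.comp_continuousOn hu_lip.continuousOn).sub hx_lip.continuousOn
  set S : Set ℝ := Icc 0 T ∩ G ⁻¹' (Ici 0) with hSdef
  have hS_closed : IsClosed S :=
    hG_cont.preimage_isClosed_of_isClosed isClosed_Icc isClosed_Ici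
  have hS_ne : S.Nonempty := by
    refine ⟨0, ⟨le_rfl, hT.le⟩, ?_⟩
    simp only [mem_preimage, mem_Ici, hGdef, hu0, hx0, f_zero]
    norm_num
  have hS_bdd : BddAbove S := (bddAbove_Icc).mono (inter_subset_left)
  set s₁ := sSup S with hs₁def
  have hs₁S : s₁ ∈ S := hS_closed.csSup_mem hS_ne hS_bdd
  have hs₁Icc : s₁ ∈ Icc 0 T := hs₁S.1
  have hs₁G : 0 ≤ G s₁ := hs₁S.2
  have hs₁T : s₁ < T := by
    rcases lt_or_eq_of_le hs₁Icc.2 with h | h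
    · exact h
    · exfalso; rw [h] at hs₁G; linarith
  have hneg : ∀ s ∈ Ioc s₁ T, G s < 0 := by
    intro s hs
    by_contra hc
    push_neg at hc
    have : s ∈ S := ⟨⟨hs₁Icc.1.trans hs.1.le, hs.2⟩, hc⟩
    have := le_csSup hS_bdd this
    linarith [hs.1]
  have hxpos : ∀ s ∈ Ioc s₁ T, 0 < x s := by
    intro s hs
    have h1 : f (u s) - x s < 0 := hneg s hs
    linarith [f_nonneg (u s)]
  have hupos : ∀ s ∈ Ioc s₁ T, 0 < u s := fun s hs =>
    hu_pos s (lt_of_le_of_lt hs₁Icc.1 hs.1) hs.2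
  -- claim : G s' ≤ G T for s' ∈ (s₁, T]
  have claim : ∀ s' ∈ Ioc s₁ T, G s' ≤ G T := by
    intro s' hs'
    have hs'0 : 0 ≤ s' := (hs₁Icc.1.trans hs'.1.le)
    have hu₀ : 0 < u s' := hupos s' hs'
    set u₀ := u s' with hu₀def
    set uT := u T with huTdef
    have huT : u₀ ≤ uT := hu_mono s' T hs'0 hs'.2 le_rfl
    have humaps : MapsTo u (Icc s' T) (Icc u₀ uT) := by
      intro σ hσ
      exact ⟨hu_mono s' σ hs'0 hσ.1 hσ.2, hu_mono σ T (hs'0.trans hσ.1) hσ.2 le_rfl⟩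
    set C : ℝ := (Real.sqrt (1 + Real.sqrt uT) + 1) / Real.sqrt u₀ with hCdef
    have hC_nonneg : 0 ≤ C := by
      apply div_nonneg _ (Real.sqrt_nonneg _)
      linarith [Real.sqrt_nonneg (1 + Real.sqrt uT)]
    have hf_lip : LipschitzOnWith C.toNNReal f (Icc u₀ uT) := by
      apply (convex_Icc u₀ uT).lipschitzOnWith_of_nnnorm_hasDerivWithin_le
        (f' := fun y => (Real.sqrt (1 + Real.sqrt y) + 1) / Real.sqrt y)
      · intro y hy
        exact (f_hasDerivAt (lt_of_lt_of_le hu₀ hy.1)).hasDerivWithinAt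
      · intro y hy
        have hy0 : 0 < y := lt_of_lt_of_le hu₀ hy.1
        rw [← NNReal.coe_le_coe, coe_nnnorm, Real.norm_eq_abs, Real.coe_toNNReal _ hC_nonneg]
        have h1 : 0 ≤ (Real.sqrt (1 + Real.sqrt y) + 1) / Real.sqrt y := by
          apply div_nonneg _ (Real.sqrt_nonneg _)
          linarith [Real.sqrt_nonneg (1 + Real.sqrt y)]
        rw [abs_of_nonneg h1, hCdef]
        have hnum : Real.sqrt (1 + Real.sqrt y) + 1 ≤ Real.sqrt (1 + Real.sqrt uT) + 1 := by
          have : Real.sqrt y ≤ Real.sqrt uT := Real.sqrt_le_sqrt hy.2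
          have := Real.sqrt_le_sqrt (by linarith : 1 + Real.sqrt y ≤ 1 + Real.sqrt uT)
          linarith
        exact div_le_div₀ (by linarith [Real.sqrt_nonneg (1 + Real.sqrt uT)]) hnum
          (Real.sqrt_pos.2 hu₀) (Real.sqrt_le_sqrt hy.1)
    have hG_lip : LipschitzOnWith (C.toNNReal * (K + K) + K) G (Icc s' T) :=
      (hf_lip.comp (hu_lip.mono (Icc_subset_Icc hs'0 le_rfl)) humaps).sub
        (hx_lip.mono (Icc_subset_Icc hs'0 le_rfl))
    apply lip_mono_of_ae_deriv_nonneg hs'.2 hG_lip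
    filter_upwards [hP'] with s hs hmem
    have hsIoo : s ∈ Ioo (0:ℝ) T := ⟨lt_of_le_of_lt hs'0 hmem.1, hmem.2⟩
    obtain ⟨_, hdt, hdx, hdt0, htl⟩ := hs hsIoo
    have hsIoc : s ∈ Ioc s₁ T := ⟨hs'.1.trans hmem.1, hmem.2.le⟩
    have hxs : 0 < x s := hxpos s hsIoc
    have hus : 0 < u s := hupos s hsIoc
    set a := deriv t s with hadef
    set bb := deriv x s with hbbdef
    set w := Real.sqrt (u s) with hwdef
    set r := Real.sqrt (1 + w) with hrdef
    have hw : 0 < w := Real.sqrt_pos.2 hus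
    have hr2 : r ^ 2 = 1 + w := Real.sq_sqrt (by linarith)
    have hr1 : 1 ≤ r := by
      have h5 : Real.sqrt 1 ≤ Real.sqrt (1 + w) := Real.sqrt_le_sqrt (by linarith)
      rw [Real.sqrt_one] at h5
      exact h5
    have hrho : rho (t s) (x s) = 1 + w := by
      rw [rho, hwdef]
      congr 1
      rw [abs_of_pos hxs]
      rw [max_eq_left (by simp only [hudef] at hus ⊢; linarith)]
    rw [hrho] at htl
    have hrb : r * bb < a := by
      have h1 : r * |bb| < a := by
        apply lt_of_pow_lt_pow_left₀ 2 hdt0.le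
        rw [mul_pow, sq_abs, hr2]
        exact htl
      have := le_abs_self bb
      nlinarith [abs_nonneg bb]
    have hfd : HasDerivAt f ((r + 1) / w) (u s) := by
      have := f_hasDerivAt hus
      rw [← hwdef, ← hrdef] at this
      exact this
    have hud : HasDerivAt u (a - bb) s := hdt.hasDerivAt.sub hdx.hasDerivAt
    have hfud : HasDerivAt (fun σ => f (u σ)) ((r + 1) / w * (a - bb)) s :=
      HasDerivAt.comp s hfd hud
    have hGd : HasDerivAt G ((r + 1) / w * (a - bb) - bb) s := hfud.sub hdx.hasDerivAt
    refine ⟨(r + 1) / w * (a - bb) - bb, ?_, hGd⟩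
    have hnum : 0 ≤ (r + 1) * (a - bb) - w * bb := by
      have hw_eq : w = (r - 1) * (r + 1) := by nlinarith [hr2]
      have h2 : 0 < a - r * bb := by linarith
      nlinarith
    have : (r + 1) / w * (a - bb) - bb = ((r + 1) * (a - bb) - w * bb) / w := by
      field_simp
    rw [this]
    exact div_nonneg hnum hw.le
  -- take the limit s' → s₁⁺
  have hnb : NeBot (𝓝[Ioc s₁ T] s₁) := by
    rw [← mem_closure_iff_nhdsWithin_neBot, closure_Ioc hs₁T.ne]
    exact ⟨le_rfl, hs₁T.le⟩
  have hlim : Tendsto G (𝓝[Ioc s₁ T] s₁) (𝓝 (G s₁)) :=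
    (hG_cont.continuousWithinAt hs₁Icc).mono
      (Ioc_subset_Icc_self.trans (Icc_subset_Icc hs₁Icc.1 le_rfl))
  have : G s₁ ≤ G T :=
    le_of_tendsto hlim (eventually_of_mem self_mem_nhdsWithin claim)
  linarith


/-- A ⊆ J⁺(0) \ closure(I⁺(0)), and A is nonempty: the globally
hyperbolic spacetime (ℝ², g) exhibits causal bubbling. -/
theorem causal_bubbling (finv : ℝ → ℝ)
    (h_nonneg : ∀ s ∈ Set.Ici (0 : ℝ), finv s ∈ Set.Ici (0 : ℝ))
    (h_left : ∀ t ∈ Set.Ici (0 : ℝ), finv (f t) = t)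
    (h_right : ∀ s ∈ Set.Ici (0 : ℝ), f (finv s) = s) :
    {p : ℝ × ℝ | 0 < p.2 ∧ 0 < p.1 - p.2 ∧ p.1 - p.2 < finv p.2}.Nonempty ∧
    {p : ℝ × ℝ | 0 < p.2 ∧ 0 < p.1 - p.2 ∧ p.1 - p.2 < finv p.2} ⊆
      Jplus \ closure Iplus := by
  constructor
  · -- nonemptiness
    have h1 : (0:ℝ) ≤ finv 1 := h_nonneg 1 (by norm_num)
    have hf1pos : 0 < finv 1 := by
      rcases lt_or_eq_of_le h1 with h | h
      · exact h
      · exfalso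
        have h2 := h_right 1 (by norm_num)
        rw [← h, f_zero] at h2
        norm_num at h2
    exact ⟨(1 + finv 1 / 2, 1), by norm_num, by simp; linarith, by simp; linarith⟩
  · rintro p ⟨hx, hu, hub⟩
    constructor
    · -- p ∈ Jplus
      right
      have hT : 0 < p.1 := by linarith
      refine ⟨p.1, fun s => (s, min s p.2), 1, hT, ?_, ?_, ?_, ?_⟩
      · apply LipschitzWith.lipschitzOnWith
        have h1 : LipschitzWith 1 (fun s : ℝ => min s p.2) := by
          simpa using LipschitzWith.min_const (LipschitzWith.id (α := ℝ)) p.2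
        have := (LipschitzWith.id (α := ℝ)).prodMk h1
        simpa using this
      · simp [min_eq_left hx.le]
      · have : min p.1 p.2 = p.2 := min_eq_right (by linarith)
        simp [this]
      · have hne : ∀ᵐ s ∂(volume.restrict (Icc (0:ℝ) p.1)), s ≠ p.2 := by
          apply ae_restrict_of_ae
          rw [ae_iff]
          have : {s : ℝ | ¬ s ≠ p.2} = {p.2} := by ext w; simp
          rw [this]
          exact Real.volume_singleton
        filter_upwards [hne, ae_restrict_mem measurableSet_Icc] with s hne hs
        have hfst : deriv (fun w : ℝ => ((w, min w p.2) : ℝ × ℝ).1) s = 1 := by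
          have : (fun w : ℝ => ((w, min w p.2) : ℝ × ℝ).1) = fun w => w := rfl
          rw [this, deriv_id'']
        constructor
        · rw [hfst]; norm_num
        · rcases lt_or_gt_of_ne hne with hlt | hgt
          · have hsnd : deriv (fun w : ℝ => ((w, min w p.2) : ℝ × ℝ).2) s = 1 := by
              have h2 : (fun w : ℝ => ((w, min w p.2) : ℝ × ℝ).2) = fun w => min w p.2 := rfl
              rw [h2]
              have hev : (fun w : ℝ => min w p.2) =ᶠ[𝓝 s] fun w => w :=
                eventually_of_mem (isOpen_Iio.mem_nhds hlt) (fun w hw => min_eq_left (le_of_lt hw))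
              rw [hev.deriv_eq, deriv_id'']
            have hmin : min s p.2 = s := min_eq_left hlt.le
            have hrho : rho ((s, min s p.2) : ℝ × ℝ).1 ((s, min s p.2) : ℝ × ℝ).2 = 1 := by
              show rho s (min s p.2) = 1
              rw [hmin, rho, abs_of_nonneg hs.1]
              simp
            rw [hfst, hsnd, hrho]
            norm_num
          · have hsnd : deriv (fun w : ℝ => ((w, min w p.2) : ℝ × ℝ).2) s = 0 := by
              have h2 : (fun w : ℝ => ((w, min w p.2) : ℝ × ℝ).2) = fun w => min w p.2 := rfl
              rw [h2]
              have hev : (fun w : ℝ => min w p.2) =ᶠ[𝓝 s] fun _ => p.2 :=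
                eventually_of_mem (isOpen_Ioi.mem_nhds hgt) (fun w hw => min_eq_right (le_of_lt hw))
              rw [hev.deriv_eq, deriv_const]
            rw [hfst, hsnd]
            ring_nf
            norm_num
    · -- p ∉ closure Iplus
      intro hmem
      set V : Set (ℝ × ℝ) := {q | 0 < q.2 ∧ f (max (q.1 - q.2) 0) < q.2} with hVdef
      have hVopen : IsOpen V := by
        apply IsOpen.inter
        · exact isOpen_lt continuous_const continuous_snd
        · exact isOpen_lt
            (f_continuous.comp ((continuous_fst.sub continuous_snd).max continuous_const))
            continuous_snd
      have hpV : p ∈ V := by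
        refine ⟨hx, ?_⟩
        rw [max_eq_left hu.le]
        have h2 := f_lt_f hu.le hub
        rwa [h_right p.2 (le_of_lt hx)] at h2
      obtain ⟨q, hqV, hqI⟩ := mem_closure_iff.1 hmem V hVopen hpV
      obtain ⟨T, γ, K, hT, hlip, h0, hend, hae⟩ := hqI
      have hbound := timelike_bound hT hlip h0 hae
      rw [hend] at hbound
      have hq1 : 0 < q.2 := hqV.1
      have hq2 : f (max (q.1 - q.2) 0) < q.2 := hqV.2
      rcases le_or_gt 0 (q.1 - q.2) with hc | hc
      · rw [max_eq_left hc] at hq2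
        linarith
      · rw [f_nonpos hc.le] at hbound
        linarith
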